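/- arXiv:math/0610027 — 2 statements merged into one kernel-verified Lean document; each statement's English description precedes it below -/
import Mathlib

section
/- Let τ ∈ Δ and φ ∈ ℝ with φ ≠ 0, and let S₁ = {F_t}_{t≥0} be the nontrivial group of elliptic automorphisms F_t(z) = m_τ(e^{iφt}·m_τ(z)). Let S₂ = {G_t}_{t≥0} be a one-parameter continuous semigroup on Δ. Then S₁ and S₂ commute (F_t(G_s(z)) = G_s(F_t(z)) for all s,t ≥ 0 and z ∈ Δ) if and only if there exists a ∈ ℂ such that G_t(z) = m_τ(e^{−at}·m_τ(z)) for all t ≥ 0 and z ∈ Δ. -/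
open Complex Filter Set Topology
open scoped Real

noncomputable section

/-- The open unit disk in the complex plane. -/
def unitDisk : Set ℂ := {z : ℂ | ‖z‖ < 1}

/-- The Stolz angle at a boundary point `τ` with half-opening `α`. -/
def stolzAngle (τ : ℂ) (α : ℝ) : Set ℂ :=
  {z ∈ unitDisk | |Complex.arg (1 - (starRingEnd ℂ) τ * z)| < α}

/-- `h` has angular limit `L` at `τ`: `h z → L` as `z → τ` in every Stolz angle. -/
def AngularLimit (h : ℂ → ℂ) (τ L : ℂ) : Prop :=
  ∀ α : ℝ, 0 < α → α < Real.pi / 2 →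
    Tendsto h (nhdsWithin τ (stolzAngle τ α)) (nhds L)

/-- A one-parameter continuous semigroup of holomorphic self-mappings of the unit disk. -/
structure ContSemigroupOn (F : ℝ → ℂ → ℂ) : Prop where
  holo : ∀ t : ℝ, 0 ≤ t → DifferentiableOn ℂ (F t) unitDisk
  maps : ∀ t : ℝ, 0 ≤ t → MapsTo (F t) unitDisk unitDisk
  comp : ∀ s : ℝ, 0 ≤ s → ∀ t : ℝ, 0 ≤ t → ∀ z ∈ unitDisk, F (t + s) z = F t (F s z)
  cont : ∀ z ∈ unitDisk, Tendsto (fun t : ℝ => F t z) (nhdsWithin 0 (Set.Ioi 0)) (nhds z)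

/-- `f` is the infinitesimal generator of the semigroup `F`:
for each `z ∈ Δ`, `u(t) = F t z` solves `u' + f(u) = 0`, `u 0 = z`. -/
def Generates (f : ℂ → ℂ) (F : ℝ → ℂ → ℂ) : Prop :=
  ∀ z ∈ unitDisk, F 0 z = z ∧
    ∀ t : ℝ, 0 ≤ t →
      HasDerivWithinAt (fun s : ℝ => F s z) (-(f (F t z))) (Set.Ici 0) t

/-- `τ` is a boundary null point of `f`: `f (r τ) → 0` as `r → 1⁻`. -/
def BoundaryNullPoint (f : ℂ → ℂ) (τ : ℂ) : Prop :=
  Tendsto (fun r : ℝ => f ((r : ℂ) * τ)) (nhdsWithin 1 (Set.Iio 1)) (nhds 0)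

/-- An automorphism of the unit disk: a holomorphic bijection of the disk onto itself. -/
def IsDiskAutomorphism (F : ℂ → ℂ) : Prop :=
  DifferentiableOn ℂ F unitDisk ∧ BijOn F unitDisk unitDisk

/-- The Möbius involution `m_τ(z) = (τ - z)/(1 - τ̄ z)`. -/
def mobius (τ z : ℂ) : ℂ := (τ - z) / (1 - (starRingEnd ℂ) τ * z)


lemma denom_ne {τ z : ℂ} (hτ : ‖τ‖ < 1) (hz : ‖z‖ ≤ 1) :
    1 - (starRingEnd ℂ) τ * z ≠ 0 := by
  intro h
  have h1 : (1:ℂ) = (starRingEnd ℂ) τ * z := by linear_combination h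
  have := congrArg norm h1
  simp [map_mul] at this
  nlinarith [norm_nonneg z, norm_nonneg τ]

lemma normSq_identity (τ z : ℂ) :
    Complex.normSq (1 - (starRingEnd ℂ) τ * z) - Complex.normSq (τ - z)
      = (1 - Complex.normSq τ) * (1 - Complex.normSq z) := by
  simp [Complex.normSq_apply, Complex.sub_re, Complex.sub_im, Complex.mul_re, Complex.mul_im]
  ring

lemma mobius_mem {τ z : ℂ} (hτ : ‖τ‖ < 1) (hz : ‖z‖ < 1) :
    ‖mobius τ z‖ < 1 := by
  have hd := denom_ne hτ hz.le
  have hdpos : 0 < ‖1 - (starRingEnd ℂ) τ * z‖ := by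
    simpa [norm_pos_iff] using hd
  have key : Complex.normSq (τ - z) < Complex.normSq (1 - (starRingEnd ℂ) τ * z) := by
    have := normSq_identity τ z
    have h1 : Complex.normSq τ < 1 := by rw [← Complex.sq_norm]; nlinarith [norm_nonneg τ]
    have h2 : Complex.normSq z < 1 := by rw [← Complex.sq_norm]; nlinarith [norm_nonneg z]
    nlinarith
  rw [mobius, norm_div, div_lt_one hdpos]
  have : ‖τ - z‖ ^ 2 < ‖1 - (starRingEnd ℂ) τ * z‖ ^ 2 := by
    rwa [Complex.sq_norm, Complex.sq_norm]
  exact lt_of_pow_lt_pow_left₀ 2 (norm_nonneg _) this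

lemma mobius_gt {τ u : ℂ} (hτ : ‖τ‖ < 1) (hu : 1 < ‖u‖)
    (hd : 1 - (starRingEnd ℂ) τ * u ≠ 0) : 1 < ‖mobius τ u‖ := by
  have hdpos : 0 < ‖1 - (starRingEnd ℂ) τ * u‖ := by
    simpa [norm_pos_iff] using hd
  have key : Complex.normSq (1 - (starRingEnd ℂ) τ * u) < Complex.normSq (τ - u) := by
    have := normSq_identity τ u
    have h1 : Complex.normSq τ < 1 := by rw [← Complex.sq_norm]; nlinarith [norm_nonneg τ]
    have h2 : 1 < Complex.normSq u := by rw [← Complex.sq_norm]; nlinarith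
    nlinarith
  rw [mobius, norm_div, lt_div_iff₀ hdpos, one_mul]
  have : ‖1 - (starRingEnd ℂ) τ * u‖ ^ 2 < ‖τ - u‖ ^ 2 := by
    rwa [Complex.sq_norm, Complex.sq_norm]
  exact lt_of_pow_lt_pow_left₀ 2 (norm_nonneg _) this

lemma mobius_invol {τ u : ℂ} (hτ : ‖τ‖ < 1)
    (hd : 1 - (starRingEnd ℂ) τ * u ≠ 0) : mobius τ (mobius τ u) = u := by
  have h2 : 1 - (starRingEnd ℂ) τ * τ ≠ 0 := denom_ne hτ hτ.le
  have h3 : 1 - (starRingEnd ℂ) τ * ((τ - u) / (1 - (starRingEnd ℂ) τ * u))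
      = (1 - (starRingEnd ℂ) τ * τ) / (1 - (starRingEnd ℂ) τ * u) := by
    field_simp
    ring
  rw [mobius, mobius, h3]
  rw [div_eq_iff (div_ne_zero h2 hd)]
  rw [mul_div_assoc', eq_div_iff hd, sub_mul, div_mul_cancel₀ _ hd]
  ring

lemma mobius_diffAt {τ u : ℂ} (hd : 1 - (starRingEnd ℂ) τ * u ≠ 0) :
    DifferentiableAt ℂ (mobius τ) u := by
  have : DifferentiableAt ℂ (fun z => (τ - z) / (1 - (starRingEnd ℂ) τ * z)) u :=
    DifferentiableAt.div (by fun_prop) (by fun_prop) hd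
  exact this


lemma rot_surj (φ : ℝ) (hφ : φ ≠ 0) :
    Tendsto (fun n : ℕ => Complex.exp (Complex.I * φ * ((π / |φ| * (1 / (n + 1)) : ℝ) : ℂ)))
      atTop (𝓝[≠] (1 : ℂ)) := by
  have hT : 0 < π / |φ| := div_pos Real.pi_pos (abs_pos.2 hφ)
  have ht0 : Tendsto (fun n : ℕ => π / |φ| * (1 / (n + 1))) atTop (𝓝 0) := by
    simpa using (tendsto_one_div_add_atTop_nhds_zero_nat.const_mul (π / |φ|))
  have h1 : Tendsto (fun n : ℕ => Complex.exp (Complex.I * φ * ((π / |φ| * (1 / (n + 1)) : ℝ) : ℂ)))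
      atTop (𝓝 1) := by
    have h2 : Tendsto (fun n : ℕ => Complex.I * φ * (π / |φ| * (1 / (n + 1)))) atTop (𝓝 0) := by
      have h3 := (Complex.continuous_ofReal.tendsto 0).comp ht0
      have h4 := h3.const_mul (Complex.I * (φ:ℂ))
      simpa [Function.comp, mul_assoc] using h4
    simpa [Function.comp_def] using (Complex.continuous_exp.tendsto 0).comp h2
  refine tendsto_nhdsWithin_of_tendsto_nhds_of_eventually_within _ h1 ?_
  refine Eventually.of_forall fun n => ?_
  have htn : (0:ℝ) < 1 / (n + 1) := by positivity
  set t : ℝ := π / |φ| * (1 / (n + 1)) with hts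
  have htpos : 0 < t := mul_pos hT htn
  have htle : |φ| * t ≤ π := by
    rw [hts, ← mul_assoc, mul_div_cancel₀ _ (abs_ne_zero.2 hφ)]
    have h5 : 1 / ((n:ℝ) + 1) ≤ 1 := by
      rw [div_le_one (by positivity)]; linarith [(Nat.cast_nonneg n : (0:ℝ) ≤ n)]
    nlinarith [Real.pi_pos]
  intro h
  rw [mem_singleton_iff, Complex.exp_eq_one_iff] at h
  obtain ⟨k, hk⟩ := h
  have h2 : Complex.I * ((φ * t : ℝ) : ℂ) = Complex.I * (((2 * π * k : ℝ)) : ℂ) := by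
    push_cast
    linear_combination hk
  have h3 : (φ * t : ℝ) = 2 * π * k := by
    exact_mod_cast mul_left_cancel₀ Complex.I_ne_zero h2
  have habs : |φ * t| ≤ π := by rw [abs_mul, abs_of_pos htpos]; exact htle
  rcases eq_or_ne k 0 with hk0 | hk0
  · rw [hk0] at h3
    simp at h3
    rcases h3 with h | h
    · exact hφ h
    · exact (ne_of_gt htpos) h
  · have hk1 : (1:ℝ) ≤ |(k:ℝ)| := by exact_mod_cast Int.one_le_abs hk0
    rw [h3, abs_mul, abs_mul] at habs
    have : |(2:ℝ)| = 2 := by norm_num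
    rw [this, abs_of_pos Real.pi_pos] at habs
    nlinarith [Real.pi_pos]

lemma half_mem : (1/2 : ℂ) ∈ unitDisk := by
  show ‖(1/2 : ℂ)‖ < 1
  norm_num

lemma linear_of_rot (φ : ℝ) (hφ : φ ≠ 0) (H : ℂ → ℂ)
    (hH : DifferentiableOn ℂ H unitDisk)
    (heq : ∀ t : ℝ, 0 ≤ t → ∀ w ∈ unitDisk,
      H (Complex.exp (Complex.I * φ * t) * w) = Complex.exp (Complex.I * φ * t) * H w) :
    ∀ w ∈ unitDisk, H w = (2 * H (1/2)) * w := by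
  set f : ℂ → ℂ := fun l => H (l * (1/2)) - l * H (1/2) with hf
  have hmaps : MapsTo (fun l : ℂ => l * (1/2)) (Metric.ball (0:ℂ) 2) unitDisk := by
    intro l hl
    rw [Metric.mem_ball, dist_zero_right] at hl
    show ‖l * (1/2)‖ < 1
    rw [norm_mul]
    have h12 : ‖(1/2 : ℂ)‖ = 1/2 := by norm_num
    rw [h12]
    linarith
  have hdf : DifferentiableOn ℂ f (Metric.ball (0:ℂ) 2) := by
    apply DifferentiableOn.sub
    · exact hH.comp (by fun_prop) hmaps
    · fun_prop
  have hana : AnalyticOnNhd ℂ f (Metric.ball (0:ℂ) 2) :=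
    hdf.analyticOnNhd Metric.isOpen_ball
  have hfreq : ∃ᶠ z in 𝓝[≠] (1:ℂ), f z = 0 := by
    apply (rot_surj φ hφ).frequently
    apply Frequently.of_forall
    intro n
    have ht : (0:ℝ) ≤ π / |φ| * (1 / (n + 1)) := by positivity
    have := heq _ ht (1/2) half_mem
    simp only [hf]
    rw [this]
    ring
  have hzero : EqOn f 0 (Metric.ball (0:ℂ) 2) := by
    apply hana.eqOn_zero_of_preconnected_of_frequently_eq_zero
      (convex_ball (0:ℂ) 2).isPreconnected _ hfreq
    rw [Metric.mem_ball, dist_zero_right]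
    norm_num
  intro w hw
  have h2w : (2*w : ℂ) ∈ Metric.ball (0:ℂ) 2 := by
    rw [Metric.mem_ball, dist_zero_right, norm_mul]
    have : ‖(2:ℂ)‖ = 2 := by norm_num
    rw [this]
    have : ‖w‖ < 1 := hw
    linarith
  have := hzero h2w
  simp only [hf, Pi.zero_apply] at this
  have h3 : H (2 * w * (1/2)) = 2 * w * H (1/2) := by linear_combination this
  have h4 : (2 : ℂ) * w * (1/2) = w := by ring
  rw [h4] at h3
  rw [h3]; ring


lemma scalar_classify (c : ℝ → ℂ) (h0 : c 0 = 1)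
    (hmul : ∀ s : ℝ, 0 ≤ s → ∀ t : ℝ, 0 ≤ t → c (s + t) = c s * c t)
    (hc : Tendsto c (𝓝[>] (0:ℝ)) (𝓝 1)) :
    ∃ b : ℂ, ∀ t : ℝ, 0 ≤ t → c t = Complex.exp (b * t) := by
  have hc0 : Tendsto c (𝓝[≥] (0:ℝ)) (𝓝 1) := by
    rw [← Set.Ioi_insert, nhdsWithin_insert, tendsto_sup]
    exact ⟨by simpa [h0] using (tendsto_pure_nhds c 0), hc⟩
  have hev : ∀ᶠ t in 𝓝[≥] (0:ℝ), dist (c t) 1 < 1/2 :=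
    hc0 (Metric.ball_mem_nhds 1 (by norm_num))
  obtain ⟨δ, hδmem, hδ⟩ := mem_nhdsGE_iff_exists_Ico_subset.mp hev
  have hδpos : 0 < δ := hδmem
  have hkey : ∀ t : ℝ, 0 ≤ t → t < δ → dist (c t) 1 < 1/2 := by
    intro t ht htδ
    exact hδ ⟨ht, htδ⟩
  have hre : ∀ t : ℝ, 0 ≤ t → t < δ → 1/2 < (c t).re ∧ c t ≠ 0 := by
    intro t ht htδ
    have h1 := hkey t ht htδ
    rw [Complex.dist_eq] at h1
    have h2 : |(c t - 1).re| ≤ ‖c t - 1‖ := Complex.abs_re_le_norm _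
    rw [Complex.sub_re, Complex.one_re] at h2
    have h3 : 1/2 < (c t).re := by
      have h4 : |(c t).re - 1| < 1/2 := lt_of_le_of_lt h2 h1
      rw [abs_lt] at h4
      linarith [h4.1]
    refine ⟨h3, fun h => by rw [h] at h3; simp at h3; linarith⟩
  set u : ℕ → ℝ := fun n => (δ/2) * (1/2)^n with hu
  have hupos : ∀ n, 0 < u n := fun n => by rw [hu]; positivity
  have huδ : ∀ n, u n < δ := by
    intro n
    have h1 : ((1:ℝ)/2)^n ≤ 1 := pow_le_one₀ (by norm_num) (by norm_num)
    have h2 : u n ≤ δ/2 := by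
      rw [hu]
      calc (δ/2) * (1/2)^n ≤ (δ/2) * 1 := by
            apply mul_le_mul_of_nonneg_left h1 (by linarith)
        _ = δ/2 := mul_one _
    linarith
  have hlog : ∀ n, Complex.log (c (u n)) = 2 * Complex.log (c (u (n+1))) := by
    intro n
    have hsum : u n = u (n+1) + u (n+1) := by rw [hu]; ring
    have h2 : c (u n) = c (u (n+1)) * c (u (n+1)) := by
      rw [hsum]; exact hmul _ (hupos _).le _ (hupos _).le
    have hr := hre (u (n+1)) (hupos _).le (huδ _)
    have harg : |Complex.arg (c (u (n+1)))| < π/2 :=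
      Complex.abs_arg_lt_pi_div_two_iff.mpr (Or.inl (by linarith [hr.1]))
    have hmem : Complex.arg (c (u (n+1))) + Complex.arg (c (u (n+1))) ∈ Set.Ioc (-π) π := by
      rw [abs_lt] at harg
      constructor <;> [linarith [Real.pi_pos]; linarith]
    rw [h2, Complex.log_mul hr.2 hr.2 hmem]; ring
  set b : ℂ := Complex.log (c (u 0)) / ((u 0 : ℝ) : ℂ) with hb
  have hL : ∀ n, Complex.log (c (u n)) = b * ((u n : ℝ) : ℂ) := by
    intro n
    induction n with
    | zero =>
      rw [hb, div_mul_cancel₀]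
      exact_mod_cast (ne_of_gt (hupos 0))
    | succ n ih =>
      have h3 : 2 * Complex.log (c (u (n+1))) = b * ((u n : ℝ) : ℂ) := by
        rw [← hlog n]; exact ih
      have h4 : ((u (n+1) : ℝ) : ℂ) = ((u n : ℝ) : ℂ) / 2 := by
        have : u (n+1) = u n / 2 := by rw [hu]; ring
        rw [this]; push_cast; ring
      rw [h4]
      linear_combination h3 / 2
  have hcu : ∀ n, c (u n) = Complex.exp (b * ((u n : ℝ) : ℂ)) := fun n => by
    rw [← hL n, Complex.exp_log (hre (u n) (hupos n).le (huδ n)).2]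
  have hpow : ∀ (n k : ℕ), c (k * u n) = Complex.exp (b * (((k * u n : ℝ)) : ℂ)) := by
    intro n k
    induction k with
    | zero => simp [h0]
    | succ k ih =>
      have h1 : ((k+1 : ℕ) : ℝ) * u n = (k * u n) + u n := by push_cast; ring
      rw [h1, hmul _ (by positivity) _ (hupos n).le, ih, hcu n, ← Complex.exp_add]
      congr 1
      push_cast
      ring
  refine ⟨b, fun t ht => ?_⟩
  set k : ℕ → ℕ := fun n => ⌊t / u n⌋₊ with hk
  have hkle : ∀ n, (k n : ℝ) * u n ≤ t := by
    intro n
    rw [hk]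
    have h1 : (⌊t / u n⌋₊ : ℝ) ≤ t / u n := Nat.floor_le (by positivity)
    calc (⌊t / u n⌋₊ : ℝ) * u n ≤ (t / u n) * u n :=
          mul_le_mul_of_nonneg_right h1 (hupos n).le
      _ = t := div_mul_cancel₀ t (ne_of_gt (hupos n))
  have hklt : ∀ n, t < (k n : ℝ) * u n + u n := by
    intro n
    have h1 : t / u n < (k n : ℝ) + 1 := Nat.lt_floor_add_one _
    have h2 : t < ((k n : ℝ) + 1) * u n := by
      calc t = (t / u n) * u n := (div_mul_cancel₀ t (ne_of_gt (hupos n))).symm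
        _ < ((k n : ℝ) + 1) * u n := mul_lt_mul_of_pos_right h1 (hupos n)
    have h3 : ((k n : ℝ) + 1) * u n = (k n : ℝ) * u n + u n := by ring
    linarith
  set r : ℕ → ℝ := fun n => t - k n * u n with hrr
  have hr0 : ∀ n, 0 ≤ r n := fun n => by rw [hrr]; simp; linarith [hkle n]
  have hct : ∀ n, c t = Complex.exp (b * (((k n * u n : ℝ)) : ℂ)) * c (r n) := by
    intro n
    have hteq : t = ((k n : ℝ) * u n) + r n := by rw [hrr]; ring
    calc c t = c (((k n : ℝ) * u n) + r n) := by rw [← hteq]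
      _ = c ((k n : ℝ) * u n) * c (r n) := hmul _ (by positivity) _ (hr0 n)
      _ = Complex.exp (b * (((k n * u n : ℝ)) : ℂ)) * c (r n) := by rw [hpow n (k n)]
  have hu0 : Tendsto u atTop (𝓝 0) := by
    rw [hu]
    have := tendsto_pow_atTop_nhds_zero_of_lt_one (by norm_num : (0:ℝ) ≤ 1/2) (by norm_num)
    simpa using this.const_mul (δ/2)
  have hku : Tendsto (fun n => (k n : ℝ) * u n) atTop (𝓝 t) := by
    apply tendsto_of_tendsto_of_tendsto_of_le_of_le
      (g := fun n => t - u n) (h := fun _ => t)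
    · simpa using tendsto_const_nhds.sub hu0
    · exact tendsto_const_nhds
    · intro n
      show t - u n ≤ (k n : ℝ) * u n
      linarith [hklt n]
    · intro n
      show (k n : ℝ) * u n ≤ t
      exact hkle n
  have hrt : Tendsto r atTop (𝓝[≥] (0:ℝ)) := by
    rw [tendsto_nhdsWithin_iff]
    constructor
    · have : Tendsto (fun n => t - (k n : ℝ) * u n) atTop (𝓝 (t - t)) :=
        tendsto_const_nhds.sub hku
      simpa using this
    · exact Eventually.of_forall hr0
  have h1 : Tendsto (fun n => Complex.exp (b * (((k n * u n : ℝ)) : ℂ)) * c (r n))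
      atTop (𝓝 (Complex.exp (b * (t : ℂ)) * 1)) := by
    apply Tendsto.mul
    · have h2 : Tendsto (fun n => b * (((k n * u n : ℝ)) : ℂ)) atTop (𝓝 (b * (t:ℂ))) := by
        exact ((Complex.continuous_ofReal.tendsto t).comp hku).const_mul b
      exact (Complex.continuous_exp.tendsto _).comp h2
    · exact hc0.comp hrt
  have h2 : Tendsto (fun _ : ℕ => c t) atTop (𝓝 (c t)) := tendsto_const_nhds
  have h3 := tendsto_nhds_unique (h1.congr (fun n => (hct n).symm)) h2
  rw [← h3, mul_one]


lemma coeff_le_one {τ e : ℂ} (hτ : ‖τ‖ < 1)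
    (h : ∀ w : ℂ, ‖w‖ < 1 → ‖mobius τ (e * w)‖ < 1) :
    ‖e‖ ≤ 1 := by
  by_contra hgt
  push_neg at hgt
  set r : ℝ := (1 / ‖e‖ + 1) / 2 with hr
  have hepos : 0 < ‖e‖ := by linarith
  have hinv : 1 / ‖e‖ < 1 := by
    rw [div_lt_one hepos]; exact hgt
  have hinvpos : 0 < 1 / ‖e‖ := by positivity
  have hrpos : 0 < r := by rw [hr]; linarith
  have hrlt : r < 1 := by rw [hr]; linarith
  have hre : 1 < ‖e‖ * r := by
    have : 1 / ‖e‖ < r := by rw [hr]; linarith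
    calc 1 = ‖e‖ * (1 / ‖e‖) := by field_simp
      _ < ‖e‖ * r := by exact mul_lt_mul_of_pos_left this hepos
  have hex : ∃ w : ℂ, ‖w‖ < 1 ∧ 1 < ‖e * w‖ ∧
      1 - (starRingEnd ℂ) τ * (e * w) ≠ 0 := by
    have habsr : ‖((r:ℝ) : ℂ)‖ = r := by
      rw [Complex.norm_real, Real.norm_eq_abs, abs_of_pos hrpos]
    have habsmr : ‖-((r:ℝ) : ℂ)‖ = r := by rw [norm_neg]; exact habsr
    by_cases h1 : 1 - (starRingEnd ℂ) τ * (e * ((r:ℝ):ℂ)) = 0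
    · refine ⟨-((r:ℝ):ℂ), by rw [habsmr]; exact hrlt, ?_, ?_⟩
      · rw [norm_mul, habsmr]; exact hre
      · intro h2
        have h3 : (1:ℂ) = (starRingEnd ℂ) τ * (e * ((r:ℝ):ℂ)) := by linear_combination h1
        have h4 : (1:ℂ) = -((starRingEnd ℂ) τ * (e * ((r:ℝ):ℂ))) := by
          rw [sub_eq_zero] at h2; rw [h2]; ring
        have : (2:ℂ) = 0 := by linear_combination h3 + h4
        norm_num at this
    · refine ⟨((r:ℝ):ℂ), by rw [habsr]; exact hrlt, ?_, h1⟩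
      rw [norm_mul, habsr]; exact hre
  obtain ⟨w, hw, hew, hd⟩ := hex
  have h5 := h w hw
  have h6 := mobius_gt hτ hew hd
  linarith


/-- Theorem 2(ii): a nontrivial group of elliptic automorphisms
`F_t(z) = m_τ(e^{iφt} m_τ(z))` commutes with a semigroup `{G_t}` if and only if
`G_t(z) = m_τ(e^{-at} m_τ(z))` for some `a ∈ ℂ`. -/
theorem commuting_with_elliptic_group_iff
    (τ : ℂ) (hτ : τ ∈ unitDisk) (φ : ℝ) (hφ : φ ≠ 0)
    (G : ℝ → ℂ → ℂ) (hSG : ContSemigroupOn G) :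
    (∀ t : ℝ, 0 ≤ t → ∀ s : ℝ, 0 ≤ s → ∀ z ∈ unitDisk,
        mobius τ (Complex.exp (Complex.I * φ * t) * mobius τ (G s z))
          = G s (mobius τ (Complex.exp (Complex.I * φ * t) * mobius τ z))) ↔
    (∃ a : ℂ, ∀ t : ℝ, 0 ≤ t → ∀ z ∈ unitDisk,
        G t z = mobius τ (Complex.exp (-a * t) * mobius τ z)) := by
  have hτa : ‖τ‖ < 1 := hτ
  have hopen : IsOpen unitDisk := by
    have : unitDisk = norm ⁻¹' (Set.Iio 1) := rfl
    rw [this]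
    exact isOpen_Iio.preimage continuous_norm
  have hmobD : DifferentiableOn ℂ (mobius τ) unitDisk := fun z hz =>
    (mobius_diffAt (denom_ne hτa (le_of_lt hz))).differentiableWithinAt
  have hmobM : MapsTo (mobius τ) unitDisk unitDisk := fun z hz => mobius_mem hτa hz
  have habsrot : ∀ t : ℝ, ‖Complex.exp (Complex.I * φ * t)‖ = 1 := by
    intro t
    rw [Complex.norm_exp]
    have : (Complex.I * φ * t).re = 0 := by simp
    rw [this, Real.exp_zero]
  constructor
  · intro hcomm
    -- G 0 is the identity on the disk
    have hG0 : ∀ z ∈ unitDisk, G 0 z = z := by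
      intro z hz
      have hcont : ContinuousAt (G 0) z :=
        (hSG.holo 0 le_rfl).continuousOn.continuousAt (hopen.mem_nhds hz)
      have h1 : Tendsto (fun t : ℝ => G t z) (𝓝[>] 0) (𝓝 z) := hSG.cont z hz
      have h2 : Tendsto (fun t : ℝ => G 0 (G t z)) (𝓝[>] 0) (𝓝 (G 0 z)) :=
        hcont.tendsto.comp h1
      have h4 : Tendsto (fun t : ℝ => G 0 (G t z)) (𝓝[>] 0) (𝓝 z) := by
        apply h1.congr'
        filter_upwards [self_mem_nhdsWithin] with t ht
        have h3 := hSG.comp t (le_of_lt ht) 0 le_rfl z hz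
        rw [zero_add] at h3
        exact h3
      exact tendsto_nhds_unique h2 h4
    set c : ℝ → ℂ := fun s => 2 * mobius τ (G s (mobius τ (1/2))) with hcdef
    -- linearity of the conjugated maps
    have hHlin : ∀ s : ℝ, 0 ≤ s → ∀ w ∈ unitDisk,
        mobius τ (G s (mobius τ w)) = c s * w := by
      intro s hs
      have hH : DifferentiableOn ℂ (fun w => mobius τ (G s (mobius τ w))) unitDisk := by
        exact (hmobD.comp ((hSG.holo s hs).comp hmobD hmobM)
          ((hSG.maps s hs).comp hmobM)).congr (fun w hw => rfl)
      have heq : ∀ t : ℝ, 0 ≤ t → ∀ w ∈ unitDisk,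
          mobius τ (G s (mobius τ (Complex.exp (Complex.I * φ * t) * w)))
            = Complex.exp (Complex.I * φ * t) * mobius τ (G s (mobius τ w)) := by
        intro t ht w hw
        set l : ℂ := Complex.exp (Complex.I * φ * t) with hl
        have hwd : ‖w‖ < 1 := hw
        have hmw : mobius τ w ∈ unitDisk := mobius_mem hτa hwd
        have hGmw : G s (mobius τ w) ∈ unitDisk := hSG.maps s hs hmw
        have h := hcomm t ht s hs (mobius τ w) hmw
        rw [mobius_invol hτa (denom_ne hτa (le_of_lt hwd))] at h
        have habs : ‖l * mobius τ (G s (mobius τ w))‖ < 1 := by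
          rw [norm_mul, hl, habsrot t, one_mul]
          exact mobius_mem hτa hGmw
        have h5 : mobius τ (mobius τ (l * mobius τ (G s (mobius τ w))))
            = l * mobius τ (G s (mobius τ w)) :=
          mobius_invol hτa (denom_ne hτa (le_of_lt habs))
        rw [← h5, h]
      have hlin := linear_of_rot φ hφ _ hH heq
      intro w hw
      rw [hlin w hw, hcdef]
    -- G s z = mobius τ (c s * mobius τ z)
    have hrep : ∀ s : ℝ, 0 ≤ s → ∀ z ∈ unitDisk, mobius τ (G s z) = c s * mobius τ z := by
      intro s hs z hz
      have hz' : ‖z‖ < 1 := hz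
      have := hHlin s hs (mobius τ z) (mobius_mem hτa hz')
      rwa [mobius_invol hτa (denom_ne hτa (le_of_lt hz'))] at this
    have hrep2 : ∀ s : ℝ, 0 ≤ s → ∀ z ∈ unitDisk, G s z = mobius τ (c s * mobius τ z) := by
      intro s hs z hz
      have hGz : G s z ∈ unitDisk := hSG.maps s hs hz
      have := mobius_invol hτa (denom_ne hτa (le_of_lt (show ‖G s z‖ < 1 from hGz)))
      rw [← this, hrep s hs z hz]
    -- properties of c
    have hc0 : c 0 = 1 := by
      have hm12 : mobius τ ((1:ℂ)/2) ∈ unitDisk := mobius_mem hτa half_mem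
      have h1 := hHlin 0 le_rfl (1/2) half_mem
      rw [hG0 _ hm12, mobius_invol hτa (denom_ne hτa (le_of_lt (show ‖(1:ℂ)/2‖ < 1 from half_mem)))] at h1
      linear_combination -2 * h1
    have hmulc : ∀ s : ℝ, 0 ≤ s → ∀ t : ℝ, 0 ≤ t → c (s + t) = c s * c t := by
      intro s hs t ht
      have hm12 : mobius τ ((1:ℂ)/2) ∈ unitDisk := mobius_mem hτa half_mem
      have hGt : G t (mobius τ ((1:ℂ)/2)) ∈ unitDisk := hSG.maps t ht hm12
      set w1 : ℂ := mobius τ (G t (mobius τ (1/2))) with hw1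
      have hw1d : w1 ∈ unitDisk := mobius_mem hτa hGt
      have hGteq : G t (mobius τ (1/2)) = mobius τ w1 := by
        rw [hw1]
        exact (mobius_invol hτa (denom_ne hτa (le_of_lt (show ‖G t (mobius τ ((1:ℂ)/2))‖ < 1 from hGt)))).symm
      have hcomp := hSG.comp t ht s hs (mobius τ (1/2)) hm12
      have h1 := hHlin (s + t) (by linarith) (1/2) half_mem
      rw [hcomp, hGteq] at h1
      have h2 := hHlin s hs w1 hw1d
      rw [h2] at h1
      have h3 : w1 = c t * (1/2) := by
        rw [hw1]
        exact hHlin t ht (1/2) half_mem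
      rw [h3] at h1
      linear_combination -2 * h1
    have hctend : Tendsto c (𝓝[>] (0:ℝ)) (𝓝 1) := by
      have hm12 : mobius τ ((1:ℂ)/2) ∈ unitDisk := mobius_mem hτa half_mem
      have h1 : Tendsto (fun s : ℝ => G s (mobius τ (1/2))) (𝓝[>] 0) (𝓝 (mobius τ (1/2))) :=
        hSG.cont _ hm12
      have h2 : ContinuousAt (mobius τ) (mobius τ (1/2)) :=
        (mobius_diffAt (denom_ne hτa (le_of_lt (show ‖mobius τ ((1:ℂ)/2)‖ < 1 from hm12)))).continuousAt
      have h3 : Tendsto (fun s : ℝ => mobius τ (G s (mobius τ (1/2)))) (𝓝[>] 0)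
          (𝓝 (mobius τ (mobius τ (1/2)))) := h2.tendsto.comp h1
      rw [mobius_invol hτa (denom_ne hτa (le_of_lt (show ‖(1:ℂ)/2‖ < 1 from half_mem)))] at h3
      have h4 := h3.const_mul (2:ℂ)
      have h5 : (2:ℂ) * (1/2) = 1 := by norm_num
      rw [h5] at h4
      exact h4
    obtain ⟨b, hbb⟩ := scalar_classify c hc0 hmulc hctend
    refine ⟨-b, fun t ht z hz => ?_⟩
    have h1 := hrep2 t ht z hz
    have h2 : (-(-b) : ℂ) * (t:ℂ) = b * t := by ring
    rw [h1, h2, ← hbb t ht]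
  · rintro ⟨a, ha⟩ t ht s hs z hz
    have hzd : ‖z‖ < 1 := hz
    -- the coefficient has modulus at most one
    have hcoeff : ‖Complex.exp (-a * s)‖ ≤ 1 := by
      apply coeff_le_one hτa
      intro w hw
      have hmw : mobius τ w ∈ unitDisk := mobius_mem hτa hw
      have h1 := ha s hs (mobius τ w) hmw
      rw [mobius_invol hτa (denom_ne hτa (le_of_lt hw))] at h1
      have h2 : G s (mobius τ w) ∈ unitDisk := hSG.maps s hs hmw
      rw [h1] at h2
      exact h2
    set e : ℂ := Complex.exp (-a * s) with he
    set l : ℂ := Complex.exp (Complex.I * φ * t) with hl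
    have hmz : mobius τ z ∈ unitDisk := mobius_mem hτa hzd
    have hemz : ‖e * mobius τ z‖ < 1 := by
      rw [norm_mul]
      calc ‖e‖ * ‖mobius τ z‖
          ≤ 1 * ‖mobius τ z‖ :=
            mul_le_mul_of_nonneg_right hcoeff (norm_nonneg _)
        _ = ‖mobius τ z‖ := one_mul _
        _ < 1 := hmz
    have hlmz : ‖l * mobius τ z‖ < 1 := by
      rw [norm_mul, hl, habsrot t, one_mul]; exact hmz
    have hGs : G s z = mobius τ (e * mobius τ z) := ha s hs z hz
    -- LHS
    have hLHS : mobius τ (l * mobius τ (G s z)) = mobius τ (l * (e * mobius τ z)) := by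
      rw [hGs, mobius_invol hτa (denom_ne hτa (le_of_lt hemz))]
    -- RHS
    have hz' : mobius τ (l * mobius τ z) ∈ unitDisk := mobius_mem hτa hlmz
    have hRHS : G s (mobius τ (l * mobius τ z)) = mobius τ (e * (l * mobius τ z)) := by
      rw [ha s hs _ hz', mobius_invol hτa (denom_ne hτa (le_of_lt hlmz))]
    rw [hLHS, hRHS]
    congr 1
    ring
end
end

section
/- Let n be a positive integer and let p be holomorphic on Δ with Re p(z^n) ≥ 0 for all z ∈ Δ. Suppose g(z) = z·p(z^n) generates a one-parameter continuous semigroup S₂ = {G_t}_{t≥0} on Δ. Then for every t ≥ 0 and every z ∈ Δ one has G_t(e^{2πi/n}·z) = e^{2πi/n}·G_t(z); that is, the rotation F₁(z) = e^{2πi/n}·z commutes with every element G_t of the semigroup. -/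
open Complex Filter Set

noncomputable section

/-- The Example: if `g(z) = z p(zⁿ)` with `Re p(zⁿ) ≥ 0` generates a semigroup `{G_t}`,
then the rotation `z ↦ e^{2πi/n} z` commutes with every `G_t`. -/
theorem rotation_commutes_with_semigroup
    (n : ℕ) (hn : 0 < n) (p : ℂ → ℂ)
    (hp : DifferentiableOn ℂ p unitDisk)
    (hre : ∀ z ∈ unitDisk, 0 ≤ (p (z ^ n)).re)
    (G : ℝ → ℂ → ℂ) (hSG : ContSemigroupOn G)
    (hgen : Generates (fun z => z * p (z ^ n)) G) :
    ∀ t : ℝ, 0 ≤ t → ∀ z ∈ unitDisk,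
      G t (Complex.exp (2 * Real.pi * Complex.I / n) * z)
        = Complex.exp (2 * Real.pi * Complex.I / n) * G t z := by
  intro t₀ ht₀ z hz
  set ω : ℂ := Complex.exp (2 * Real.pi * Complex.I / n) with hω
  set g : ℂ → ℂ := fun z => z * p (z ^ n) with hgdef
  have hopen : IsOpen unitDisk := isOpen_lt continuous_norm continuous_const
  have hωn : ω ^ n = 1 := by
    rw [hω, ← Complex.exp_nat_mul]
    have h1 : (n : ℂ) * (2 * Real.pi * Complex.I / n) = 2 * Real.pi * Complex.I := by
      have : (n : ℂ) ≠ 0 := Nat.cast_ne_zero.2 hn.ne'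
      field_simp
    rw [h1, Complex.exp_two_pi_mul_I]
  have habsω : ‖ω‖ = 1 := by
    have h2 : (2 * (Real.pi : ℂ) * Complex.I / n) = ((2 * Real.pi / n : ℝ) : ℂ) * Complex.I := by
      push_cast; ring
    rw [hω, h2, Complex.norm_exp]
    simp [Complex.mul_I_re]
  have hωz : ω * z ∈ unitDisk := by
    simpa [unitDisk, map_mul, habsω] using hz
  have hgω : ∀ w : ℂ, g (ω * w) = ω * g w := by
    intro w
    simp only [hgdef, mul_pow, hωn, one_mul]
    ring
  have hpow : ∀ w ∈ unitDisk, w ^ n ∈ unitDisk := by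
    intro w hw
    simp only [unitDisk, mem_setOf_eq, norm_pow]
    exact pow_lt_one₀ (norm_nonneg _) (show ‖w‖ < 1 from hw) hn.ne'
  have hgdiff : DifferentiableOn ℂ g unitDisk := by
    apply DifferentiableOn.mul differentiableOn_id
    exact hp.comp (DifferentiableOn.pow differentiableOn_id n) hpow
  set f₁ : ℝ → ℂ := fun s => G s (ω * z) with hf₁
  set f₂ : ℝ → ℂ := fun s => ω * G s z with hf₂
  have hder₁ : ∀ t : ℝ, 0 ≤ t → HasDerivWithinAt f₁ (-(g (f₁ t))) (Set.Ici 0) t :=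
    fun t ht => (hgen (ω * z) hωz).2 t ht
  have hder₂ : ∀ t : ℝ, 0 ≤ t → HasDerivWithinAt f₂ (-(g (f₂ t))) (Set.Ici 0) t := by
    intro t ht
    have h3 := ((hgen z hz).2 t ht).const_mul ω
    have heq : ω * -(g (G t z)) = -(g (f₂ t)) := by
      rw [hf₂]; simp only [hgω]; ring
    simpa [hf₂, heq] using h3
  have hcont₁ : ContinuousOn f₁ (Icc 0 t₀) := fun s hs =>
    ((hder₁ s hs.1).continuousWithinAt).mono Icc_subset_Ici_self
  have hcont₂ : ContinuousOn f₂ (Icc 0 t₀) := fun s hs =>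
    ((hder₂ s hs.1).continuousWithinAt).mono Icc_subset_Ici_self
  have hmem₁ : ∀ s ∈ Icc (0:ℝ) t₀, f₁ s ∈ unitDisk := fun s hs => hSG.maps s hs.1 hωz
  have hmem₂ : ∀ s ∈ Icc (0:ℝ) t₀, f₂ s ∈ unitDisk := by
    intro s hs
    have h4 := hSG.maps s hs.1 hz
    simpa [hf₂, unitDisk, map_mul, habsω] using h4
  set K : Set ℂ := f₁ '' Icc 0 t₀ ∪ f₂ '' Icc 0 t₀ with hK
  have hKc : IsCompact K :=
    ((isCompact_Icc.image_of_continuousOn hcont₁).union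
      (isCompact_Icc.image_of_continuousOn hcont₂))
  have hKsub : K ⊆ unitDisk := by
    rintro x (⟨s, hs, rfl⟩ | ⟨s, hs, rfl⟩)
    · exact hmem₁ s hs
    · exact hmem₂ s hs
  have hKne : K.Nonempty := ⟨f₁ 0, Or.inl ⟨0, ⟨le_refl 0, ht₀⟩, rfl⟩⟩
  obtain ⟨x₀, hx₀K, hx₀⟩ := hKc.exists_isMaxOn hKne continuous_norm.continuousOn
  set r : ℝ := ‖x₀‖ with hr
  have hr1 : r < 1 := hKsub hx₀K
  have hKball : K ⊆ Metric.closedBall 0 r := by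
    intro x hx
    simpa [Metric.mem_closedBall, Complex.dist_eq] using hx₀ hx
  have hballdisk : Metric.closedBall (0:ℂ) r ⊆ unitDisk := by
    intro x hx
    simp only [Metric.mem_closedBall, Complex.dist_eq, sub_zero] at hx
    exact lt_of_le_of_lt hx hr1
  -- Lipschitz bound
  have hgan : AnalyticOnNhd ℂ g unitDisk := hgdiff.analyticOnNhd hopen
  have hfd : ContinuousOn (fderiv ℂ g) unitDisk := hgan.fderiv.continuousOn
  obtain ⟨C, hC⟩ := (isCompact_closedBall (0:ℂ) r).exists_bound_of_continuousOn
    (hfd.mono hballdisk)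
  set C' : NNReal := Real.toNNReal C with hC'
  have hbound : ∀ x ∈ Metric.closedBall (0:ℂ) r, ‖fderiv ℂ g x‖₊ ≤ C' := by
    intro x hx
    rw [← NNReal.coe_le_coe, coe_nnnorm, hC', Real.coe_toNNReal']
    exact le_max_of_le_left (hC x hx)
  have hlip : LipschitzOnWith C' g (Metric.closedBall 0 r) :=
    (convex_closedBall (0:ℂ) r).lipschitzOnWith_of_nnnorm_fderiv_le
      (fun x hx => hgdiff.differentiableAt (hopen.mem_nhds (hballdisk hx))) hbound
  have hvlip : ∀ t : ℝ, LipschitzOnWith C' (fun w => -(g w)) (Metric.closedBall (0:ℂ) r) := by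
    intro t x hx y hy
    simpa [edist_neg_neg] using hlip hx hy
  have huniq := ODE_solution_unique_of_mem_Icc_right
    (v := fun _ w => -(g w)) (s := fun _ => Metric.closedBall (0:ℂ) r)
    (fun t _ => hvlip t) hcont₁
    (fun t ht => (hder₁ t ht.1).mono (Ici_subset_Ici.2 ht.1))
    (fun t ht => hKball (Or.inl ⟨t, Ico_subset_Icc_self ht, rfl⟩))
    hcont₂
    (fun t ht => (hder₂ t ht.1).mono (Ici_subset_Ici.2 ht.1))
    (fun t ht => hKball (Or.inr ⟨t, Ico_subset_Icc_self ht, rfl⟩))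
    (by rw [hf₁, hf₂]; simp only [(hgen (ω * z) hωz).1, (hgen z hz).1])
  exact huniq ⟨ht₀, le_refl t₀⟩
end
end
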